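/- Let λ₁ ≥ λ₂, μ₁ ≥ μ₂, ν₁ ≥ ν₂ be real numbers with λ₁+λ₂+μ₁+μ₂ = ν₁+ν₂. Then there exist 2×2 Hermitian matrices A, B with σ(A) = (λ₁,λ₂), σ(B) = (μ₁,μ₂), σ(A+B) = (ν₁,ν₂) if and only if max{λ₁+μ₂, λ₂+μ₁} ≤ ν₁ ≤ λ₁+μ₁. -/

import Mathlib

set_option maxHeartbeats 1000000

open Polynomial

private lemma cp2' (M : Matrix (Fin 2) (Fin 2) ℂ) :
    M.charpoly = X^2 - C M.trace * X + C M.det := by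
  rw [Matrix.charpoly, Matrix.det_fin_two, Matrix.trace_fin_two, Matrix.det_fin_two]
  simp [Matrix.charmatrix_apply_eq, Matrix.charmatrix_apply_ne, map_add, map_mul]
  ring

private lemma cp_iff' (M : Matrix (Fin 2) (Fin 2) ℂ) (a b : ℂ) :
    M.charpoly = (X - C a) * (X - C b) ↔ M.trace = a + b ∧ M.det = a * b := by
  have hr : (X - C a) * (X - C b) = X^2 - C (a+b) * X + C (a*b) := by
    rw [map_add, map_mul]; ring
  rw [cp2', hr]
  constructor
  · intro h
    have h1 := congrArg (fun p => p.coeff 1) h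
    have h0 := congrArg (fun p => p.coeff 0) h
    simp only [coeff_add, coeff_sub, coeff_X_pow, coeff_C_mul, coeff_X_one, coeff_X_zero,
      coeff_C, mul_one, mul_zero, coeff_mul_X] at h1 h0
    simp at h1 h0
    exact ⟨by linear_combination -h1, h0⟩
  · rintro ⟨h1, h2⟩
    rw [h1, h2]

private lemma extract' (M : Matrix (Fin 2) (Fin 2) ℂ) (hM : M.IsHermitian) (a b : ℝ)
    (h : M.charpoly = (X - C (a:ℂ)) * (X - C (b:ℂ))) :
    (M 0 0).re + (M 1 1).re = a + b ∧
    (M 0 0).re * (M 1 1).re - ‖M 0 1‖ ^ 2 = a * b := by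
  obtain ⟨ht, hd⟩ := (cp_iff' M _ _).1 h
  rw [Matrix.trace_fin_two] at ht
  rw [Matrix.det_fin_two] at hd
  have h00 : M 0 0 = ((M 0 0).re : ℂ) := (hM.coe_re_apply_self 0).symm
  have h11 : M 1 1 = ((M 1 1).re : ℂ) := (hM.coe_re_apply_self 1).symm
  have h10 : M 1 0 = star (M 0 1) := (hM.apply 1 0).symm
  rw [h00, h11] at ht hd
  rw [h10] at hd
  constructor
  · exact_mod_cast ht
  · have habs : M 0 1 * star (M 0 1) = ((‖M 0 1‖ ^ 2 : ℝ) : ℂ) := by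
      rw [Complex.sq_norm]
      exact_mod_cast Complex.mul_conj (M 0 1)
    rw [habs] at hd
    exact_mod_cast hd

private lemma aux2' (dl dm al be p q : ℝ) (hdl : 0 ≤ dl) (hdm : 0 ≤ dm)
    (hp : 0 ≤ p) (hq : 0 ≤ q)
    (hpa : 4*p^2 = dl^2 - al^2) (hqb : 4*q^2 = dm^2 - be^2) :
    4*p*q ≤ dl*dm + al*be ∧ 4*p*q ≤ dl*dm - al*be := by
  have hal : al^2 ≤ dl^2 := by nlinarith [sq_nonneg p]
  have hbe : be^2 ≤ dm^2 := by nlinarith [sq_nonneg q]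
  have h1 : |al| ≤ dl := by
    rw [abs_le]; constructor <;> nlinarith [abs_nonneg al, sq_abs al]
  have h2 : |be| ≤ dm := by
    rw [abs_le]; constructor <;> nlinarith [abs_nonneg be, sq_abs be]
  have hab : |al*be| ≤ dl*dm := by
    rw [abs_mul]; exact mul_le_mul h1 h2 (abs_nonneg _) hdl
  have habs := abs_le.1 hab
  constructor
  · nlinarith [sq_nonneg (al*dm + be*dl), mul_nonneg hp hq, sq_nonneg (4*p*q - (dl*dm+al*be))]
  · nlinarith [sq_nonneg (al*dm - be*dl), mul_nonneg hp hq, sq_nonneg (4*p*q - (dl*dm-al*be))]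

private lemma master' (l₁ l₂ m₁ m₂ v₁ v₂ a₁ a₂ b₁ b₂ p q r : ℝ)
    (hA1 : a₁ + a₂ = l₁ + l₂) (hA2 : a₁*a₂ - p^2 = l₁*l₂)
    (hB1 : b₁ + b₂ = m₁ + m₂) (hB2 : b₁*b₂ - q^2 = m₁*m₂)
    (hS2 : (a₁+b₁)*(a₂+b₂) - r^2 = v₁*v₂)
    (hl : l₂ ≤ l₁) (hm : m₂ ≤ m₁)
    (hp : 0 ≤ p) (hq : 0 ≤ q) (hr : 0 ≤ r)
    (htri1 : r ≤ p + q) (htri2 : p ≤ q + r) (htri3 : q ≤ p + r) :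
    (l₁+m₁)*(l₂+m₂) ≤ v₁*v₂ ∧ v₁*v₂ ≤ (l₁+m₂)*(l₂+m₁) := by
  have hpa : 4*p^2 = (l₁-l₂)^2 - (a₁-a₂)^2 := by
    linear_combination (a₁+a₂+l₁+l₂)*hA1 - 4*hA2
  have hqb : 4*q^2 = (m₁-m₂)^2 - (b₁-b₂)^2 := by
    linear_combination (b₁+b₂+m₁+m₂)*hB1 - 4*hB2
  have hAB : (a₁+a₂)*(b₁+b₂) = (l₁+l₂)*(m₁+m₂) := by rw [hA1, hB1]
  obtain ⟨k1, k2⟩ := aux2' (l₁-l₂) (m₁-m₂) (a₁-a₂) (b₁-b₂) p q (by linarith) (by linarith)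
    hp hq hpa hqb
  have hr1 : (p-q)^2 ≤ r^2 := by nlinarith
  have hr2 : r^2 ≤ (p+q)^2 := by nlinarith
  constructor
  · nlinarith [hAB]
  · nlinarith [hAB]

theorem horn_two_by_two (l₁ l₂ m₁ m₂ v₁ v₂ : ℝ)
    (hl : l₂ ≤ l₁) (hm : m₂ ≤ m₁) (hv : v₂ ≤ v₁)
    (htr : l₁ + l₂ + m₁ + m₂ = v₁ + v₂) :
    (∃ A B : Matrix (Fin 2) (Fin 2) ℂ, A.IsHermitian ∧ B.IsHermitian ∧
        A.charpoly = (X - C (l₁ : ℂ)) * (X - C (l₂ : ℂ)) ∧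
        B.charpoly = (X - C (m₁ : ℂ)) * (X - C (m₂ : ℂ)) ∧
        (A + B).charpoly = (X - C (v₁ : ℂ)) * (X - C (v₂ : ℂ))) ↔
      (max (l₁ + m₂) (l₂ + m₁) ≤ v₁ ∧ v₁ ≤ l₁ + m₁) := by
  constructor
  · rintro ⟨A, B, hA, hB, hcA, hcB, hcS⟩
    obtain ⟨hA1, hA2⟩ := extract' A hA l₁ l₂ hcA
    obtain ⟨hB1, hB2⟩ := extract' B hB m₁ m₂ hcB
    obtain ⟨hS1, hS2⟩ := extract' (A+B) (hA.add hB) v₁ v₂ hcS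
    simp only [Matrix.add_apply, Complex.add_re] at hS1 hS2
    set cA := A 0 1
    set cB := B 0 1
    set p := ‖cA‖ with hp'
    set q := ‖cB‖ with hq'
    set r := ‖cA + cB‖ with hr'
    have htri1 : r ≤ p + q := norm_add_le cA cB
    have htri2 : p ≤ q + r := by
      have := norm_add_le (cA + cB) (-cB)
      simpa [add_comm] using this
    have htri3 : q ≤ p + r := by
      have := norm_add_le (cA + cB) (-cA)
      simpa [add_comm] using this
    obtain ⟨key1, key2⟩ := master' l₁ l₂ m₁ m₂ v₁ v₂ _ _ _ _ p q r hA1 hA2 hB1 hB2 hS2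
      hl hm (norm_nonneg _) (norm_nonneg _) (norm_nonneg _)
      htri1 htri2 htri3
    have hvv : v₂ = l₁ + l₂ + m₁ + m₂ - v₁ := by linarith
    rw [hvv] at key1 key2
    constructor
    · apply max_le
      · by_contra hc
        push_neg at hc
        have h2 : 0 < v₁ - (l₂ + m₁) := by linarith
        nlinarith [mul_pos (show (0:ℝ) < (l₁+m₂) - v₁ by linarith) h2]
      · by_contra hc
        push_neg at hc
        have h2 : 0 < v₁ - (l₁ + m₂) := by linarith
        nlinarith [mul_pos (show (0:ℝ) < (l₂+m₁) - v₁ by linarith) h2]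
    · by_contra hc
      push_neg at hc
      have h2 : 0 < v₁ - (l₂ + m₂) := by linarith
      nlinarith [mul_pos (show (0:ℝ) < v₁ - (l₁+m₁) by linarith) h2]
  · rintro ⟨h1, h2⟩
    have h1a : l₁ + m₂ ≤ v₁ := le_trans (le_max_left _ _) h1
    have h1b : l₂ + m₁ ≤ v₁ := le_trans (le_max_right _ _) h1
    -- find x, t
    obtain ⟨x, t, hx2, hx1, ht2, hdet⟩ : ∃ x t : ℝ, m₂ ≤ x ∧ x ≤ m₁ ∧
        t^2 = (m₁-x)*(x-m₂) ∧ (l₁+x)*(l₂+m₁+m₂-x) - t^2 = v₁*v₂ := by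
      rcases eq_or_lt_of_le hl with heq | hlt
      · -- l₂ = l₁
        refine ⟨m₁, 0, hm, le_refl _, by ring, ?_⟩
        have hv1 : v₁ = l₁ + m₁ := by linarith
        have hv2 : v₂ = l₂ + m₂ := by linarith
        rw [hv1, hv2]; ring
      · -- l₂ < l₁
        set x := (l₁*l₂ + l₁*(m₁+m₂) + m₁*m₂ - v₁*v₂)/(l₁-l₂) with hxdef
        have hpos : 0 < l₁ - l₂ := by linarith
        have hx_eq : (l₁-l₂)*x = l₁*l₂ + l₁*(m₁+m₂) + m₁*m₂ - v₁*v₂ := by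
          rw [hxdef]; field_simp
        have hvv : v₂ = l₁ + l₂ + m₁ + m₂ - v₁ := by linarith
        have key1 : (l₁+m₁)*(l₂+m₂) ≤ v₁*v₂ := by
          rw [hvv]
          nlinarith [mul_nonneg (show (0:ℝ) ≤ (l₁+m₁) - v₁ by linarith)
            (show (0:ℝ) ≤ v₁ - (l₂+m₂) by linarith)]
        have key2 : v₁*v₂ ≤ (l₁+m₂)*(l₂+m₁) := by
          rw [hvv]
          nlinarith [mul_nonneg (show (0:ℝ) ≤ v₁ - (l₁+m₂) by linarith)
            (show (0:ℝ) ≤ v₁ - (l₂+m₁) by linarith)]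
        have hxm1 : x ≤ m₁ := by
          by_contra hc
          push_neg at hc
          have : (l₁-l₂)*(x - m₁) > 0 := mul_pos hpos (by linarith)
          nlinarith
        have hxm2 : m₂ ≤ x := by
          by_contra hc
          push_neg at hc
          have : (l₁-l₂)*(m₂ - x) > 0 := mul_pos hpos (by linarith)
          nlinarith
        refine ⟨x, Real.sqrt ((m₁-x)*(x-m₂)), hxm2, hxm1, ?_, ?_⟩
        · exact Real.sq_sqrt (mul_nonneg (by linarith) (by linarith))
        · rw [Real.sq_sqrt (mul_nonneg (by linarith) (by linarith))]
          linear_combination -hx_eq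
    -- construct matrices
    refine ⟨!![(l₁:ℂ), 0; 0, (l₂:ℂ)], !![(x:ℂ), (t:ℂ); (t:ℂ), ((m₁+m₂-x : ℝ):ℂ)], ?_, ?_, ?_, ?_, ?_⟩
    · apply Matrix.IsHermitian.ext
      intro i j
      fin_cases i <;> fin_cases j <;>
        simp [Complex.conj_ofReal]
    · apply Matrix.IsHermitian.ext
      intro i j
      fin_cases i <;> fin_cases j <;>
        simp [Complex.conj_ofReal]
    · rw [cp_iff']
      constructor
      · rw [Matrix.trace_fin_two_of]
      · rw [Matrix.det_fin_two_of]; ring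
    · rw [cp_iff']
      constructor
      · rw [Matrix.trace_fin_two_of]; push_cast; ring
      · rw [Matrix.det_fin_two_of]
        have h' : x*(m₁+m₂-x) - t*t = m₁*m₂ := by linear_combination -ht2
        have hc := congrArg (Complex.ofReal) h'
        push_cast at hc ⊢
        linear_combination hc
    · have hsum : (!![(l₁:ℂ), 0; 0, (l₂:ℂ)] + !![(x:ℂ), (t:ℂ); (t:ℂ), ((m₁+m₂-x : ℝ):ℂ)])
          = !![(l₁:ℂ)+(x:ℂ), (t:ℂ); (t:ℂ), (l₂:ℂ)+((m₁+m₂-x : ℝ):ℂ)] := by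
        ext i j
        fin_cases i <;> fin_cases j <;> simp [Matrix.add_apply]
      rw [hsum, cp_iff']
      constructor
      · rw [Matrix.trace_fin_two_of]
        have h' : (l₁+x) + (l₂+m₁+m₂-x) = v₁ + v₂ := by linarith
        have hc := congrArg (Complex.ofReal) h'
        push_cast at hc ⊢
        linear_combination hc
      · rw [Matrix.det_fin_two_of]
        have h' : (l₁+x)*(l₂+m₁+m₂-x) - t*t = v₁*v₂ := by linear_combination hdet
        have hc := congrArg (Complex.ofReal) h'
        push_cast at hc ⊢
        linear_combination hc
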